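/- Suppose κ < σ < λ are regular cardinals with θ^{<σ} < λ for all θ < λ, and D is an ultrafilter on κ. If I is a positively σ-entangled linear order of cardinality λ, then the ultrapower I^κ/D is positively σ-entangled. -/

import Mathlib

open Cardinal

universe u

/-- `X` is positively σ-entangled. -/
def PosEnt (σ : Cardinal.{u}) (X : Type u) [LinearOrder X] : Prop :=
  ∀ (E : Type u), #E < 1 + σ → ∀ u : Set E, (u = ∅ ∨ u = Set.univ) →
    ∀ t : E → (#X).ord.ToType → X, (∀ e, Function.Injective (t e)) →
      ∃ α β, α < β ∧ ∀ e : E, e ∈ u ↔ t e α < t e β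

namespace StabAux

open Ordinal

noncomputable def seqRec (pick q : Ordinal.{u} → Ordinal.{u}) : Ordinal.{u} → Ordinal.{u} :=
  Ordinal.lt_wf.fix fun ξ IH => pick (Ordinal.bsup ξ (fun ζ h => q (IH ζ h)) + 1)

theorem seqRec_eq (pick q : Ordinal.{u} → Ordinal.{u}) (ξ : Ordinal.{u}) :
    seqRec pick q ξ = pick (Ordinal.bsup ξ (fun ζ _ => q (seqRec pick q ζ)) + 1) := by
  rw [seqRec, WellFounded.fix_eq]

theorem self_lt_add_one (a : Ordinal.{u}) : a < a + 1 := by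
  rw [Ordinal.add_one_eq_succ]; exact Order.lt_succ a

theorem add_one_lt_of_lt {a o : Ordinal.{u}} (h : Order.IsSuccLimit o) (ha : a < o) : a + 1 < o := by
  rw [Ordinal.add_one_eq_succ]; exact h.succ_lt ha

/-- Pressing-down step: there is `η < λ` such that unboundedly many `δ < λ`
satisfy: every value `W δ c` below `δ` is in fact `≤ η`. -/
theorem press (lam σ : Cardinal.{u}) (hlam : lam.IsRegular) (hσ : σ.IsRegular)
    (hσlam : σ < lam) (C : Type u) (hC : #C < σ)
    (W : Ordinal.{u} → C → Ordinal.{u}) :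
    ∃ η, η < lam.ord ∧ ∀ b, b < lam.ord → ∃ δ, b ≤ δ ∧ δ < lam.ord ∧
      ∀ c, W δ c < δ → W δ c ≤ η := by
  classical
  by_contra hcon
  push_neg at hcon
  have hσ0 : ℵ₀ ≤ σ := hσ.aleph0_le
  have hlam0 : ℵ₀ ≤ lam := hlam.aleph0_le
  have hlim : Order.IsSuccLimit (lam.ord) := Cardinal.isSuccLimit_ord hlam0
  have hσlim : Order.IsSuccLimit (σ.ord) := Cardinal.isSuccLimit_ord hσ0
  choose bd hbd1 hbd2 using hcon
  let g : Ordinal.{u} → Ordinal.{u} := fun x => if h : x < lam.ord then max x (bd x h) else x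
  have hgle : ∀ x, x ≤ g x := by
    intro x; dsimp only [g]; split
    · exact le_max_left _ _
    · exact le_rfl
  have hglt : ∀ x, x < lam.ord → g x < lam.ord := by
    intro x h; simp only [g, dif_pos h]; exact max_lt h (hbd1 x h)
  set N := seqRec id g with hN
  have hNeq : ∀ ξ, N ξ = Ordinal.bsup ξ (fun ζ _ => g (N ζ)) + 1 := by
    intro ξ; rw [hN, seqRec_eq]; rfl
  have hNmono : ∀ ζ ξ, ζ < ξ → N ζ < N ξ := by
    intro ζ ξ h
    calc N ζ ≤ g (N ζ) := hgle _
      _ ≤ Ordinal.bsup ξ (fun ζ' _ => g (N ζ')) := Ordinal.le_bsup _ ζ h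
      _ < Ordinal.bsup ξ (fun ζ' _ => g (N ζ')) + 1 := self_lt_add_one _
      _ = N ξ := (hNeq ξ).symm
  have hNlt : ∀ ξ, ξ < σ.ord → N ξ < lam.ord := by
    intro ξ hξ
    induction ξ using Ordinal.induction with
    | _ ξ IH =>
      rw [hNeq]
      refine add_one_lt_of_lt hlim ?_
      refine bsup_lt_ord_of_isRegular hlam ?_ ?_
      · exact Cardinal.lt_ord.mp (hξ.trans_le (ord_le_ord.mpr hσlam.le))
      · intro ζ hζ; exact hglt _ (IH ζ hζ (hζ.trans hξ))
  set δs := Ordinal.bsup σ.ord (fun ξ _ => N ξ) with hδs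
  have hδlt : δs < lam.ord :=
    bsup_lt_ord_of_isRegular hlam (by rw [card_ord]; exact hσlam) hNlt
  have hNδ : ∀ ξ, ξ < σ.ord → N ξ < δs := by
    intro ξ h
    have h1 : ξ + 1 < σ.ord := add_one_lt_of_lt hσlim h
    exact lt_of_lt_of_le (hNmono ξ (ξ + 1) (self_lt_add_one ξ)) (Ordinal.le_bsup _ (ξ + 1) h1)
  have hch : ∀ c : C, ∃ ξ, ξ < σ.ord ∧ (W δs c < δs → W δs c < N ξ) := by
    intro c
    by_cases h : W δs c < δs
    · rw [hδs] at h
      obtain ⟨ξ, hξ, hlt⟩ := (Ordinal.lt_bsup _).mp h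
      exact ⟨ξ, hξ, fun _ => hlt⟩
    · exact ⟨0, hσlim.pos, fun h' => absurd h' h⟩
  choose ξc hξc1 hξc2 using hch
  have hξs : iSup ξc < σ.ord := iSup_lt_ord_of_isRegular hσ hC hξc1
  set ξs := iSup ξc with hξsdef
  have hη : N ξs < lam.ord := hNlt _ hξs
  have hmem : ∀ c, W δs c < δs → W δs c ≤ N ξs := by
    intro c h
    have h1 : W δs c < N (ξc c) := hξc2 c h
    rcases eq_or_lt_of_le (Ordinal.le_iSup ξc c) with he | hl
    · exact (he ▸ h1).le
    · exact (h1.trans (hNmono _ _ hl)).le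
  have hbdle : bd (N ξs) hη < δs := by
    have h1 : ξs + 1 < σ.ord := add_one_lt_of_lt hσlim hξs
    calc bd (N ξs) hη ≤ g (N ξs) := by
          simp only [g, dif_pos hη]; exact le_max_right _ _
      _ ≤ Ordinal.bsup (ξs + 1) (fun ζ _ => g (N ζ)) :=
          Ordinal.le_bsup _ ξs (self_lt_add_one ξs)
      _ < N (ξs + 1) := by rw [hNeq (ξs + 1)]; exact self_lt_add_one _
      _ ≤ δs := (hNδ _ h1).le
  obtain ⟨c, hc1, hc2⟩ := hbd2 (N ξs) hη δs hbdle.le hδlt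
  exact absurd (hmem c hc1) (not_le.mpr hc2)

/-- Stabilization lemma: one can choose a strictly increasing `λ`-sequence of
indices on which each coordinate of `W` is either constant or strictly
increasing (in particular injective). -/
theorem stab (lam σ : Cardinal.{u}) (hlam : lam.IsRegular) (hσ : σ.IsRegular)
    (hσlam : σ < lam) (hpow : ∀ θ < lam, θ ^< σ < lam)
    (C : Type u) (hC : #C < σ)
    (W : Ordinal.{u} → C → Ordinal.{u}) (hW : ∀ δ, δ < lam.ord → ∀ c, W δ c < lam.ord) :
    ∃ N : Ordinal.{u} → Ordinal.{u},
      (∀ ξ, N ξ < lam.ord) ∧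
      (∀ ξ ζ, ξ < ζ → ζ < lam.ord → N ξ < N ζ) ∧
      ∃ K : Set C,
        (∀ c ∈ K, ∀ ξ ζ, W (N ξ) c = W (N ζ) c) ∧
        (∀ c ∉ K, ∀ ξ ζ, ξ < ζ → ζ < lam.ord → W (N ξ) c < W (N ζ) c) := by
  classical
  obtain ⟨η, hη, hS⟩ := press lam σ hlam hσ hσlam C hC W
  have hlam0 : ℵ₀ ≤ lam := hlam.aleph0_le
  have hlim : Order.IsSuccLimit (lam.ord) := Cardinal.isSuccLimit_ord hlam0
  have hη1 : η + 1 < lam.ord := add_one_lt_of_lt hlim hη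
  -- patterns
  let pat : Ordinal.{u} → C → Option ((η + 1).ToType) := fun δ c =>
    if h : W δ c ≤ η then
      some ((Ordinal.ToType.mk (o := η + 1)) ⟨W δ c, by
        rw [Ordinal.add_one_eq_succ]; exact Order.lt_succ_iff.mpr h⟩)
    else none
  have hP : #(C → Option ((η + 1).ToType)) < lam := by
    have h1 : #((η + 1).ToType) < lam := by
      rw [mk_toType]; exact Cardinal.lt_ord.mp hη1
    have h2 : #(Option ((η + 1).ToType)) < lam := by
      rw [mk_option]
      exact Cardinal.add_lt_of_lt hlam0 h1 (one_lt_aleph0.trans_le hlam0)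
    calc #(C → Option ((η + 1).ToType)) = #(Option ((η + 1).ToType)) ^ #C :=
          (power_def _ _).symm
      _ ≤ #(Option ((η + 1).ToType)) ^< σ := le_powerlt _ hC
      _ < lam := hpow _ h2
  -- find an unbounded pattern class
  have hup : ∃ p : C → Option ((η + 1).ToType), ∀ b, b < lam.ord → ∃ δ, b ≤ δ ∧
      δ < lam.ord ∧ η < δ ∧ pat δ = p ∧ ∀ c, W δ c < δ → W δ c ≤ η := by
    by_contra hcon
    push_neg at hcon
    choose bd hbd1 hbd2 using hcon
    have hB : iSup bd < lam.ord := iSup_lt_ord_of_isRegular hlam hP hbd1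
    obtain ⟨δ, hbδ, hdlam, hSδ⟩ := hS (max (iSup bd + 1) (η + 1))
      (max_lt (add_one_lt_of_lt hlim hB) hη1)
    have hηδ : η < δ := lt_of_lt_of_le (lt_of_lt_of_le (self_lt_add_one η)
      (le_max_right _ _)) hbδ
    have hbdδ : bd (pat δ) ≤ δ :=
      le_trans (le_trans (Ordinal.le_iSup bd (pat δ)) (le_trans (self_lt_add_one _).le
        (le_max_left _ _))) hbδ
    obtain ⟨c, hc1, hc2⟩ := hbd2 (pat δ) δ hbdδ hdlam hηδ rfl
    exact absurd (hSδ c hc1) (not_le.mpr hc2)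
  obtain ⟨p, hU⟩ := hup
  set K : Set C := {c | (p c).isSome} with hKdef
  let vv : C → Ordinal.{u} := fun c =>
    if h : (p c).isSome then (((Ordinal.ToType.mk (o := η + 1))).symm ((p c).get h)).val else 0
  -- decoding
  have hdec : ∀ δ, η < δ → pat δ = p → (∀ c, W δ c < δ → W δ c ≤ η) →
      ∀ c, (c ∈ K → W δ c = vv c) ∧ (c ∉ K → δ ≤ W δ c) := by
    intro δ hηδ hp hSδ c
    have hc := congrFun hp c
    constructor
    · intro hcK
      by_cases h : W δ c ≤ η
      · simp only [pat, dif_pos h] at hc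
        have hsome : (p c).isSome := hcK
        have hget : (p c).get hsome = (Ordinal.ToType.mk (o := η + 1)) ⟨W δ c, by
            rw [Ordinal.add_one_eq_succ]; exact Order.lt_succ_iff.mpr h⟩ :=
          Option.some_injective _ ((Option.some_get hsome).trans hc.symm)
        simp only [vv, dif_pos hsome, hget]
        rw [((Ordinal.ToType.mk (o := η + 1))).symm_apply_apply]
      · simp only [pat, dif_neg h] at hc
        have : (p c).isSome := hcK
        rw [← hc] at this
        simp at this
    · intro hcK
      by_cases h : W δ c ≤ η
      · exfalso
        apply hcK
        simp only [pat, dif_pos h] at hc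
        rw [hKdef]
        show (p c).isSome
        rw [← hc]; rfl
      · by_contra hlt
        exact h (hSδ c (not_le.mp hlt))
  have hPick : ∀ b, ∃ δ, (b < lam.ord → b ≤ δ) ∧ δ < lam.ord ∧
      (∀ c ∈ K, W δ c = vv c) ∧ (∀ c ∉ K, δ ≤ W δ c) := by
    intro b
    rcases lt_or_ge b lam.ord with hb | hb
    · obtain ⟨δ, h1, h2, h3, h4, h5⟩ := hU b hb
      exact ⟨δ, fun _ => h1, h2, fun c hc => (hdec δ h3 h4 h5 c).1 hc,
        fun c hc => (hdec δ h3 h4 h5 c).2 hc⟩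
    · obtain ⟨δ, h1, h2, h3, h4, h5⟩ := hU 0 hlim.pos
      exact ⟨δ, fun hb' => absurd hb' (not_lt.mpr hb), h2,
        fun c hc => (hdec δ h3 h4 h5 c).1 hc, fun c hc => (hdec δ h3 h4 h5 c).2 hc⟩
  choose pick hpick1 hpick2 hpick3 hpick4 using hPick
  let q : Ordinal.{u} → Ordinal.{u} := fun δ => max δ (iSup (fun c : C => W δ c))
  have hq1 : ∀ δ, δ ≤ q δ := fun δ => le_max_left _ _
  have hq2 : ∀ δ c, W δ c ≤ q δ := fun δ c =>
    (Ordinal.le_iSup (fun c : C => W δ c) c).trans (le_max_right _ _)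
  have hq3 : ∀ δ, δ < lam.ord → q δ < lam.ord := fun δ h =>
    max_lt h (iSup_lt_ord_of_isRegular hlam (hC.trans hσlam) (hW δ h))
  set N := seqRec pick q with hN
  have hNeq : ∀ ξ, N ξ = pick (Ordinal.bsup ξ (fun ζ _ => q (N ζ)) + 1) := by
    intro ξ; rw [hN, seqRec_eq]
  have hNlt : ∀ ξ, N ξ < lam.ord := by
    intro ξ; rw [hNeq]; exact hpick2 _
  have hΓ : ∀ ξ, ξ < lam.ord → Ordinal.bsup ξ (fun ζ _ => q (N ζ)) + 1 < lam.ord := by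
    intro ξ hξ
    refine add_one_lt_of_lt hlim ?_
    exact bsup_lt_ord_of_isRegular hlam (Cardinal.lt_ord.mp hξ)
      (fun ζ _ => hq3 _ (hNlt ζ))
  have hkey : ∀ x ξ ζ, ξ < ζ → ζ < lam.ord → x ≤ q (N ξ) → x < N ζ := by
    intro x ξ ζ h hζ hx
    calc x ≤ q (N ξ) := hx
      _ ≤ Ordinal.bsup ζ (fun ζ' _ => q (N ζ')) := Ordinal.le_bsup _ ξ h
      _ < Ordinal.bsup ζ (fun ζ' _ => q (N ζ')) + 1 := self_lt_add_one _
      _ ≤ N ζ := by rw [hNeq ζ]; exact hpick1 _ (hΓ ζ hζ)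
  refine ⟨N, hNlt, ?_, K, ?_, ?_⟩
  · intro ξ ζ h hζ
    exact hkey (N ξ) ξ ζ h hζ (hq1 _)
  · intro c hc ξ ζ
    have h1 : W (N ξ) c = vv c := by rw [hNeq ξ]; exact hpick3 _ c hc
    have h2 : W (N ζ) c = vv c := by rw [hNeq ζ]; exact hpick3 _ c hc
    rw [h1, h2]
  · intro c hc ξ ζ h hζ
    have h1 : W (N ξ) c < N ζ := hkey _ ξ ζ h hζ (hq2 _ c)
    have h2 : N ζ ≤ W (N ζ) c := by rw [hNeq ζ]; exact hpick4 _ c hc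
    exact h1.trans_le h2

end StabAux

open Ordinal in
/-- Proposition 6.5: for regular `κ < σ < λ` with `θ^{<σ} < λ` for all `θ < λ`
    and an ultrafilter `D` on `κ`, the ultrapower of a positively σ-entangled
    linear order of cardinality λ is positively σ-entangled. -/
theorem stmt_10 (κ σ lam : Cardinal.{u})
    (hκ : κ.IsRegular) (hσ : σ.IsRegular) (hlam : lam.IsRegular)
    (hκσ : κ < σ) (hσlam : σ < lam)
    (hpow : ∀ θ < lam, θ ^< σ < lam)
    (D : Ultrafilter κ.ord.ToType)
    (I : Type u) [LinearOrder I] (hI : #I = lam)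
    (hent : PosEnt σ I) :
    PosEnt σ (Filter.Germ (D : Filter κ.ord.ToType) I) := by
  classical
  intro E hE u hu t ht
  have hσ0 : ℵ₀ ≤ σ := hσ.aleph0_le
  have hlam0 : ℵ₀ ≤ lam := hlam.aleph0_le
  have h1σ : (1 : Cardinal.{u}) + σ = σ :=
    Cardinal.add_eq_right hσ0 (one_lt_aleph0.le.trans hσ0)
  have hEσ : #E < σ := by rwa [h1σ] at hE
  -- λ ≤ #Germ
  have hIG : #I ≤ #(Filter.Germ (D : Filter κ.ord.ToType) I) :=
    Cardinal.mk_le_of_injective (f := fun a : I => ((a : Filter.Germ (D : Filter κ.ord.ToType) I)))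
      (fun a b hab => Filter.Germ.const_inj.mp hab)
  have hGT : lam.ord ≤ (#(Filter.Germ (D : Filter κ.ord.ToType) I)).ord :=
    ord_le_ord.mpr ((le_of_eq hI.symm).trans hIG)
  -- embedding of T into the index type of the germ
  let em : Set.Iio lam.ord ≃o lam.ord.ToType := (Ordinal.ToType.mk (o := lam.ord))
  let t2o : lam.ord.ToType → Ordinal.{u} := fun x => (em.symm x).val
  have ht2o_lt : ∀ {a b : lam.ord.ToType}, a < b ↔ t2o a < t2o b := by
    intro a b
    constructor
    · intro h; exact Subtype.coe_lt_coe.mpr (em.symm.lt_iff_lt.mpr h)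
    · intro h; exact em.symm.lt_iff_lt.mp (Subtype.coe_lt_coe.mp h)
  have ht2o_inj : Function.Injective t2o := fun a b h => em.symm.injective (Subtype.ext h)
  have ht2o_mem : ∀ x : lam.ord.ToType, t2o x < lam.ord := fun x => (em.symm x).2
  let j : lam.ord.ToType → (#(Filter.Germ (D : Filter κ.ord.ToType) I)).ord.ToType := fun x =>
    Ordinal.ToType.mk ⟨t2o x, (ht2o_mem x).trans_le hGT⟩
  have hj : StrictMono j := by
    intro x y hxy
    apply (Ordinal.ToType.mk).lt_iff_lt.mpr
    exact Subtype.mk_lt_mk.mpr (ht2o_lt.mp hxy)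
  -- representatives
  have hrep : ∀ (e : E) (z : lam.ord.ToType), ∃ fn : κ.ord.ToType → I,
      (↑fn : Filter.Germ (D : Filter κ.ord.ToType) I) = t e (j z) := fun e z =>
    Filter.Germ.inductionOn (t e (j z)) (fun fn => ⟨fn, rfl⟩)
  choose f hf using hrep
  -- bijection I ≃ T
  obtain ⟨ψ⟩ : Nonempty (I ≃ lam.ord.ToType) := Cardinal.eq.mp (hI.trans (mk_ord_toType lam).symm)
  -- coordinates
  have hCσ : #(E × κ.ord.ToType) < σ := by
    rw [Cardinal.mk_prod, Cardinal.lift_id, Cardinal.lift_id, mk_ord_toType]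
    exact Cardinal.mul_lt_of_lt hσ0 hEσ hκσ
  -- the coordinate function
  let W : Ordinal.{u} → E × κ.ord.ToType → Ordinal.{u} := fun δ c =>
    if h : δ < lam.ord then t2o (ψ (f c.1 (em ⟨δ, h⟩) c.2)) else 0
  have hW : ∀ δ, δ < lam.ord → ∀ c, W δ c < lam.ord := by
    intro δ h c
    simp only [W, dif_pos h]
    exact ht2o_mem _
  obtain ⟨N, hN1, hN2, K, hK1, hK2⟩ :=
    StabAux.stab lam σ hlam hσ hσlam hpow (E × κ.ord.ToType) hCσ W hW
  -- the final index map
  let Φ : lam.ord.ToType → lam.ord.ToType := fun x => em ⟨N (t2o x), hN1 _⟩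
  have hΦ : StrictMono Φ := by
    intro x y hxy
    apply em.lt_iff_lt.mpr
    exact Subtype.mk_lt_mk.mpr (hN2 _ _ (ht2o_lt.mp hxy) (ht2o_mem y))
  have hWeq : ∀ (x : lam.ord.ToType) (c : E × κ.ord.ToType),
      W (N (t2o x)) c = t2o (ψ (f c.1 (Φ x) c.2)) := by
    intro x c
    simp only [W, dif_pos (hN1 _)]
    rfl
  -- constancy on K
  have hconst : ∀ (e : E) (i : κ.ord.ToType), (e, i) ∈ K → ∀ x y : lam.ord.ToType, f e (Φ x) i = f e (Φ y) i := by
    intro e i hK x y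
    have h := hK1 (e, i) hK (t2o x) (t2o y)
    rw [hWeq x (e, i), hWeq y (e, i)] at h
    exact ψ.injective (ht2o_inj h)
  -- injectivity off K
  have hinj : ∀ (e : E) (i : κ.ord.ToType), (e, i) ∉ K →
      Function.Injective (fun x : lam.ord.ToType => f e (Φ x) i) := by
    intro e i hK x y hxy
    by_contra hne
    have hlem : ∀ a b : lam.ord.ToType, a < b → f e (Φ a) i ≠ f e (Φ b) i := by
      intro a b hab heq
      have h := hK2 (e, i) hK (t2o a) (t2o b) (ht2o_lt.mp hab) (ht2o_mem b)
      rw [hWeq a (e, i), hWeq b (e, i), heq] at h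
      exact lt_irrefl _ h
    rcases lt_trichotomy x y with h | h | h
    · exact hlem x y h hxy
    · exact hne h
    · exact hlem y x h hxy.symm
  -- T is nontrivial
  have hTnt : Nontrivial lam.ord.ToType := by
    apply Cardinal.one_lt_iff_nontrivial.mp
    rw [mk_ord_toType]
    exact one_lt_aleph0.trans_le hlam0
  obtain ⟨x0, y0, hxy0⟩ := hTnt.exists_pair_ne
  -- for every e, the non-K part of the coordinates is D-large
  have hDK : ∀ e : E, {i : κ.ord.ToType | (e, i) ∉ K} ∈ (D : Filter κ.ord.ToType) := by
    intro e
    by_contra h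
    have hKmem : {i : κ.ord.ToType | (e, i) ∈ K} ∈ (D : Filter κ.ord.ToType) := by
      by_contra h2
      exact h ((Ultrafilter.compl_mem_iff_notMem).mpr h2)
    have hgerm : t e (j (Φ x0)) = t e (j (Φ y0)) := by
      rw [← hf e (Φ x0), ← hf e (Φ y0)]
      apply Filter.Germ.coe_eq.mpr
      apply Filter.eventually_iff.mpr
      exact Filter.mem_of_superset hKmem (fun i hi => hconst e i hi x0 y0)
    exact hxy0 (hΦ.injective (hj.injective (ht e hgerm)))
  -- prepare entangledness of I
  have hent' : ∀ (E0 : Type u), #E0 < 1 + σ → ∀ u0 : Set E0, (u0 = ∅ ∨ u0 = Set.univ) →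
      ∀ t0 : E0 → lam.ord.ToType → I, (∀ e, Function.Injective (t0 e)) →
        ∃ α β, α < β ∧ ∀ e : E0, e ∈ u0 ↔ t0 e α < t0 e β := by
    rw [← hI]
    exact hent
  clear hent
  set E' := {c : E × κ.ord.ToType // c ∉ K} with hE'def
  have hE'σ : #E' < 1 + σ := by
    rw [h1σ]
    exact lt_of_le_of_lt (Cardinal.mk_subtype_le _) hCσ
  let t' : E' → lam.ord.ToType → I := fun c x => f c.1.1 (Φ x) c.1.2
  have ht' : ∀ c : E', Function.Injective (t' c) := fun c => hinj c.1.1 c.1.2 c.2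
  rcases hu with rfl | rfl
  · -- u = ∅
    obtain ⟨x, y, hxy, hiff⟩ := hent' E' hE'σ ∅ (Or.inl rfl) t' ht'
    refine ⟨j (Φ x), j (Φ y), hj (hΦ hxy), ?_⟩
    intro e
    simp only [Set.mem_empty_iff_false, false_iff]
    have hle : t e (j (Φ y)) ≤ t e (j (Φ x)) := by
      rw [← hf e (Φ x), ← hf e (Φ y)]
      apply Filter.Germ.coe_le.mpr
      apply Filter.Eventually.of_forall
      intro i
      by_cases hK : (e, i) ∈ K
      · exact le_of_eq (hconst e i hK y x)
      · have := hiff ⟨(e, i), hK⟩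
        simp only [Set.mem_empty_iff_false, false_iff] at this
        exact not_lt.mp this
    exact fun hlt => absurd hle (not_le.mpr hlt)
  · -- u = univ
    obtain ⟨x, y, hxy, hiff⟩ := hent' E' hE'σ Set.univ (Or.inr rfl) t' ht'
    refine ⟨j (Φ x), j (Φ y), hj (hΦ hxy), ?_⟩
    intro e
    simp only [Set.mem_univ, true_iff]
    rw [← hf e (Φ x), ← hf e (Φ y)]
    apply Filter.Germ.coe_lt.mpr
    apply Filter.eventually_iff.mpr
    apply Filter.mem_of_superset (hDK e)
    intro i hi
    have := hiff ⟨(e, i), hi⟩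
    simp only [Set.mem_univ, true_iff] at this
    exact this
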